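/- Let k ≥ 2 be an integer. There exist rational constants c_l, indexed by integers l with 0 ≤ l ≤ k−2 and l ≡ k (mod 2), depending only on k, such that c_{k−2} ≠ 0 and sin^k(πz)·cot_k(πz) = ∑_{0 ≤ l ≤ k−2, l ≡ k mod 2} c_l·cos(lπz) for every z ∈ ℂ ∖ ℤ. -/

import Mathlib

open Finset

/-- `cot_k(z) = ((−1)^{k−1}/(k−1)!) · (d/dz)^{k−1} cot(z)`. -/
noncomputable def cotk (k : ℕ) (z : ℂ) : ℂ :=
  ((-1 : ℂ) ^ (k - 1) / (Nat.factorial (k - 1) : ℂ)) *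
    iteratedDeriv (k - 1) (fun w : ℂ => Complex.cos w / Complex.sin w) z

private lemma deriv_cotk (m : ℕ) (w : ℂ) :
    deriv (cotk (m+1)) w = -(m+1 : ℂ) * cotk (m+2) w := by
  have h1 : cotk (m+1) = fun z => ((-1:ℂ)^m / (Nat.factorial m : ℂ)) *
      iteratedDeriv m (fun w : ℂ => Complex.cos w / Complex.sin w) z := rfl
  rw [h1, deriv_const_mul_field, ← iteratedDeriv_succ]
  show _ = -(m+1:ℂ) * (((-1:ℂ)^(m+1) / (Nat.factorial (m+1) : ℂ)) * _)
  have hf : (Nat.factorial (m+1) : ℂ) = (m+1) * Nat.factorial m := by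
    push_cast [Nat.factorial_succ]; ring
  rw [hf]
  have h2 : (Nat.factorial m : ℂ) ≠ 0 := Nat.cast_ne_zero.2 (Nat.factorial_ne_zero m)
  have h3 : ((m:ℂ)+1) ≠ 0 := Nat.cast_add_one_ne_zero m
  field_simp
  rw [show m + 2 - 1 = m + 1 by omega]
  ring

private lemma cotk_two (w : ℂ) (hw : Complex.sin w ≠ 0) : cotk 2 w = 1 / Complex.sin w ^ 2 := by
  have h0 : cotk 2 w = -(deriv (fun z : ℂ => Complex.cos z / Complex.sin z) w) := by
    simp [cotk, iteratedDeriv_one]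
  rw [h0, deriv_fun_div (Complex.differentiableAt_cos) (Complex.differentiableAt_sin) hw]
  rw [Complex.deriv_cos, Complex.deriv_sin]
  have h4 : -Complex.sin w * Complex.sin w - Complex.cos w * Complex.cos w = -1 := by
    linear_combination -(Complex.sin_sq_add_cos_sq w)
  rw [h4, neg_div, neg_neg]

private lemma step (m : ℕ) (g g' : ℂ → ℂ) (hg : ∀ z, HasDerivAt g (g' z) z)
    (h : ∀ z, Complex.sin z ≠ 0 → Complex.sin z ^ (m+1) * cotk (m+1) z = g z)
    (w : ℂ) (hw : Complex.sin w ≠ 0) :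
    Complex.sin w ^ (m+2) * cotk (m+2) w
      = Complex.cos w * g w - (1/(m+1 : ℂ)) * Complex.sin w * g' w := by
  have hU : IsOpen {z : ℂ | Complex.sin z ≠ 0} :=
    isOpen_compl_singleton.preimage Complex.continuous_sin
  have heq : (cotk (m+1)) =ᶠ[nhds w] fun z => g z / Complex.sin z ^ (m+1) := by
    filter_upwards [hU.mem_nhds hw] with z hz
    rw [eq_div_iff (pow_ne_zero _ hz)]
    linear_combination h z hz
  have hD := (hg w).div ((Complex.hasDerivAt_sin w).pow (m+1)) (pow_ne_zero _ hw)
  have h6 : ((m:ℂ)+1) ≠ 0 := Nat.cast_add_one_ne_zero m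
  have hc : cotk (m+2) w = deriv (cotk (m+1)) w / (-(m+1:ℂ)) := by
    rw [deriv_cotk m w, mul_div_cancel_left₀ _ (neg_ne_zero.2 h6)]
  rw [hc, heq.deriv_eq, (show deriv (fun z => g z / Complex.sin z ^ (m+1)) w = (g' w * Complex.sin w ^ (m+1) - g w * (((m + 1 : ℕ) : ℂ) * Complex.sin w ^ m * Complex.cos w)) / (Complex.sin w ^ (m+1)) ^ 2 from hD.deriv), div_div, ← mul_div_assoc,
    div_eq_iff (mul_ne_zero (pow_ne_zero _ (pow_ne_zero _ hw)) (neg_ne_zero.2 h6))]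
  field_simp
  push_cast
  ring

/-- new coefficients after one induction step -/
private def dcoef (j : ℕ) (c : ℕ → ℚ) (m : ℕ) : ℚ :=
  (if 1 ≤ m ∧ (m-1) % 2 = j % 2 then c (m-1) * (1 - ((m-1 : ℕ) : ℚ)/((j:ℚ)+2))/2 else 0)
  + (if m = 1 ∧ 0 % 2 = j % 2 then c 0 / 2 else 0)
  + (if (m+1) % 2 = j % 2 ∧ m + 1 < j + 1 then c (m+1) * (1 + ((m+1 : ℕ) : ℚ)/((j:ℚ)+2))/2 else 0)

private noncomputable def T1 (j : ℕ) (c : ℕ → ℚ) (w : ℂ) (m : ℕ) : ℂ :=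
  if 1 ≤ m ∧ (m-1) % 2 = j % 2 then
    (c (m-1) : ℂ) * (1 - ((m-1 : ℕ) : ℂ)/((j:ℂ)+2))/2 * Complex.cos ((m:ℂ) * w) else 0

private noncomputable def T2 (j : ℕ) (c : ℕ → ℚ) (w : ℂ) (m : ℕ) : ℂ :=
  if m = 1 ∧ 0 % 2 = j % 2 then (c 0 : ℂ)/2 * Complex.cos ((m:ℂ) * w) else 0

private noncomputable def T3 (j : ℕ) (c : ℕ → ℚ) (w : ℂ) (m : ℕ) : ℂ :=
  if (m+1) % 2 = j % 2 ∧ m + 1 < j + 1 then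
    (c (m+1) : ℂ) * (1 + ((m+1 : ℕ) : ℂ)/((j:ℂ)+2))/2 * Complex.cos ((m:ℂ) * w) else 0

private noncomputable def Pt (j : ℕ) (c : ℕ → ℚ) (w : ℂ) (l : ℕ) : ℂ :=
  (c l : ℂ) * (1 - ((l : ℕ) : ℂ)/((j:ℂ)+2))/2 * Complex.cos (((l+1 : ℕ) : ℂ) * w)

private noncomputable def Qt (j : ℕ) (c : ℕ → ℚ) (w : ℂ) (l : ℕ) : ℂ :=
  if l = 0 then (c 0 : ℂ)/2 * Complex.cos w
  else (c l : ℂ) * (1 + ((l : ℕ) : ℂ)/((j:ℂ)+2))/2 * Complex.cos (((l-1 : ℕ) : ℂ) * w)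

private lemma resum (j : ℕ) (c : ℕ → ℚ) (w : ℂ) :
    ∑ m ∈ (Finset.range (j+2)).filter (fun m => m % 2 = (j+1) % 2),
        ((dcoef j c m : ℚ) : ℂ) * Complex.cos ((m:ℂ) * w)
    = ∑ l ∈ (Finset.range (j+1)).filter (fun l => l % 2 = j % 2),
        (c l : ℂ) * (Complex.cos ((l:ℂ)*w) * Complex.cos w
          + ((l:ℂ)/((j:ℂ)+2)) * Complex.sin ((l:ℂ)*w) * Complex.sin w) := by
  -- split RHS terms
  have hRsplit : ∀ l : ℕ,
      (c l : ℂ) * (Complex.cos ((l:ℂ)*w) * Complex.cos w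
        + ((l:ℂ)/((j:ℂ)+2)) * Complex.sin ((l:ℂ)*w) * Complex.sin w)
      = Pt j c w l + Qt j c w l := by
    intro l
    cases l with
    | zero => simp [Pt, Qt]; ring
    | succ i =>
      have e1 : ((i+1+1 : ℕ) : ℂ) * w = ((i+1 : ℕ) : ℂ) * w + w := by push_cast; ring
      have e2 : ((i+1-1 : ℕ) : ℂ) * w = ((i+1 : ℕ) : ℂ) * w - w := by
        simp only [Nat.add_sub_cancel]; push_cast; ring
      simp only [Pt, Qt, Nat.succ_ne_zero, if_false, e1, e2, Complex.cos_add, Complex.cos_sub]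
      push_cast
      ring
  -- split LHS terms
  have hLsplit : ∀ m ∈ Finset.range (j+2),
      (if m % 2 = (j+1) % 2 then ((dcoef j c m : ℚ) : ℂ) * Complex.cos ((m:ℂ) * w) else 0)
      = T1 j c w m + T2 j c w m + T3 j c w m := by
    intro m _
    simp only [dcoef, T1, T2, T3]
    push_cast
    split_ifs with h1 h2 h3 h4 <;> push_cast <;> first
      | ring1
      | (exfalso; omega)
  rw [Finset.sum_filter, Finset.sum_congr rfl hLsplit]
  rw [Finset.sum_add_distrib, Finset.sum_add_distrib]
  have hA : ∑ m ∈ Finset.range (j+2), T1 j c w m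
      = ∑ l ∈ (Finset.range (j+1)).filter (fun l => l % 2 = j % 2), Pt j c w l := by
    rw [Finset.sum_filter, Finset.sum_range_succ']
    have hz : T1 j c w 0 = 0 := by simp [T1]
    rw [hz, add_zero]
    refine Finset.sum_congr rfl fun i _ => ?_
    simp only [T1, Pt, Nat.add_sub_cancel]
    have : (1 ≤ i + 1 ∧ i % 2 = j % 2) ↔ (i % 2 = j % 2) := by omega
    rw [if_congr this rfl rfl]
  have hB : ∑ m ∈ Finset.range (j+2), T2 j c w m
      = (if 0 % 2 = j % 2 then (c 0 : ℂ)/2 * Complex.cos w else 0) := by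
    by_cases hj : 0 % 2 = j % 2
    · simp only [T2, hj, and_true]
      rw [Finset.sum_ite_eq' (Finset.range (j+2)) 1
        (fun m => (c 0 : ℂ)/2 * Complex.cos ((m:ℂ) * w))]
      simp [hj]
    · simp [T2, hj]
  have hC : ∑ m ∈ Finset.range (j+2), T3 j c w m
      = ∑ i ∈ Finset.range j, (if (i+1) % 2 = j % 2 then Qt j c w (i+1) else 0) := by
    have hsub : Finset.range j ⊆ Finset.range (j+2) := Finset.range_subset_range.2 (by omega)
    have hvan : ∀ m ∈ Finset.range (j+2), m ∉ Finset.range j → T3 j c w m = 0 := by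
      intro m _ hm
      rw [Finset.mem_range] at hm
      simp only [T3]
      rw [if_neg (by omega)]
    rw [← Finset.sum_subset hsub hvan]
    refine Finset.sum_congr rfl fun m hm => ?_
    rw [Finset.mem_range] at hm
    simp only [T3, Qt, Nat.succ_ne_zero, if_false, Nat.add_sub_cancel]
    have : ((m+1) % 2 = j % 2 ∧ m + 1 < j + 1) ↔ ((m+1) % 2 = j % 2) := by omega
    rw [if_congr this rfl rfl]
  have hD : ∑ l ∈ (Finset.range (j+1)).filter (fun l => l % 2 = j % 2), Qt j c w l
      = (∑ i ∈ Finset.range j, (if (i+1) % 2 = j % 2 then Qt j c w (i+1) else 0))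
        + (if 0 % 2 = j % 2 then (c 0 : ℂ)/2 * Complex.cos w else 0) := by
    rw [Finset.sum_filter, Finset.sum_range_succ']
    congr 1
  rw [hA, hB, hC]
  rw [Finset.sum_congr rfl (fun l _ => hRsplit l), Finset.sum_add_distrib, hD]
  ring

private lemma key (j : ℕ) : ∃ c : ℕ → ℚ, c j ≠ 0 ∧ ∀ w : ℂ, Complex.sin w ≠ 0 →
    Complex.sin w ^ (j+2) * cotk (j+2) w
      = ∑ l ∈ (Finset.range (j+1)).filter (fun l => l % 2 = j % 2),
          (c l : ℂ) * Complex.cos ((l:ℂ) * w) := by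
  induction j with
  | zero =>
    refine ⟨fun _ => 1, one_ne_zero, fun w hw => ?_⟩
    rw [cotk_two w hw]
    have h8 : (Finset.range 1).filter (fun l => l % 2 = 0 % 2) = {0} := rfl
    rw [h8, Finset.sum_singleton]
    norm_num
    field_simp
  | succ j ih =>
    obtain ⟨c, hc0, hcf⟩ := ih
    refine ⟨dcoef j c, ?_, ?_⟩
    · -- nonzero leading coefficient
      by_cases hj : j = 0
      · subst hj
        have h1 : dcoef 0 c 1 = c 0 := by
          simp only [dcoef]
          norm_num
        rw [h1]; exact hc0
      · have h2 : ((j:ℚ)+2) ≠ 0 := by positivity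
        have h1 : dcoef j c (j+1) = c j / ((j:ℚ)+2) := by
          have e1 : (1 ≤ j + 1 ∧ (j+1-1) % 2 = j % 2) := by omega
          have e2 : ¬(j + 1 = 1 ∧ 0 % 2 = j % 2) := by omega
          have e3 : ¬((j+1+1) % 2 = j % 2 ∧ j + 1 + 1 < j + 1) := by omega
          simp only [dcoef, if_pos e1, if_neg e2, if_neg e3, Nat.add_sub_cancel]
          rw [if_pos (by simp)]
          field_simp
          ring
        rw [h1]
        exact div_ne_zero hc0 h2
    · intro w hw
      -- the derivative of the cosine sum
      set S := (Finset.range (j+1)).filter (fun l => l % 2 = j % 2) with hS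
      set g : ℂ → ℂ := fun z => ∑ l ∈ S, (c l : ℂ) * Complex.cos ((l:ℂ) * z) with hg
      set g' : ℂ → ℂ := fun z => ∑ l ∈ S, (c l : ℂ) * (-Complex.sin ((l:ℂ) * z) * (l:ℂ)) with hg'
      have hder : ∀ z, HasDerivAt g (g' z) z := by
        intro z
        apply HasDerivAt.fun_sum
        intro l _
        have h4 : HasDerivAt (fun y : ℂ => (l:ℂ) * y) ((l:ℂ)) z := by
          simpa using (hasDerivAt_id z).const_mul (l:ℂ)
        have h5 := (Complex.hasDerivAt_cos ((l:ℂ) * z)).comp z h4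
        simpa [mul_comm] using h5.const_mul (c l : ℂ)
      have hstep := step (j+1) g g' hder (fun z hz => hcf z hz) w hw
      rw [show j + 1 + 2 = j + 3 from rfl] at hstep
      rw [hstep]
      rw [resum j c w]
      rw [Finset.mul_sum, Finset.mul_sum, ← Finset.sum_sub_distrib]
      refine Finset.sum_congr rfl fun l _ => ?_
      have h6 : ((j:ℂ)+1+1) = ((j:ℂ)+2) := by ring
      push_cast
      ring
  
theorem stmt_12 (k : ℕ) (hk : 2 ≤ k) :
    ∃ c : ℕ → ℚ, c (k - 2) ≠ 0 ∧
      ∀ z : ℂ, (∀ m : ℤ, z ≠ (m : ℂ)) →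
        Complex.sin ((Real.pi : ℂ) * z) ^ k * cotk k ((Real.pi : ℂ) * z)
          = ∑ l ∈ (Finset.range (k - 1)).filter (fun l => l % 2 = k % 2),
              (c l : ℂ) * Complex.cos ((l : ℂ) * (Real.pi : ℂ) * z) := by
  obtain ⟨c, hc0, hcf⟩ := key (k - 2)
  have hk2 : k - 2 + 2 = k := by omega
  refine ⟨c, hc0, fun z hz => ?_⟩
  have hsin : Complex.sin ((Real.pi : ℂ) * z) ≠ 0 := by
    rw [Complex.sin_ne_zero_iff]
    intro m
    intro hcon
    apply hz m
    have hpi : (Real.pi : ℂ) ≠ 0 := by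
      exact_mod_cast Real.pi_ne_zero
    have h9 : (Real.pi : ℂ) * z = (Real.pi : ℂ) * (m : ℂ) := by rw [hcon]; ring
    exact mul_left_cancel₀ hpi h9
  have hthis := hcf ((Real.pi : ℂ) * z) hsin
  rw [hk2] at hthis
  have hrange : k - 2 + 1 = k - 1 := by omega
  rw [hrange] at hthis
  rw [hthis]
  have hfil : (Finset.range (k-1)).filter (fun l => l % 2 = (k-2) % 2)
      = (Finset.range (k-1)).filter (fun l => l % 2 = k % 2) := by
    apply Finset.filter_congr
    intro x _
    try simp only [eq_iff_iff]
    omega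
  rw [hfil]
  refine Finset.sum_congr rfl fun l _ => ?_
  rw [mul_assoc]
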